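/- Let u : Bⁿ → ℝ be a bounded function on the open unit ball of ℝⁿ such that u - ‖·‖²/a is concave for some a > 0, and let g : Bⁿ → ℝ be a non-negative C² function with compact support contained in Bⁿ. Then the product gu, extended by zero outside Bⁿ, is semi-concave on ℝⁿ, i.e., there exists C > 0 such that x ↦ g(x)u(x) - C‖x‖² is concave on ℝⁿ. -/

import Mathlib

set_option maxHeartbeats 1000000

open Set Metric

section Aux
variable {E : Type*} [NormedAddCommGroup E] [NormedSpace ℝ E]

lemma midpoint_to_concave
    {f : E → ℝ} (hf : Continuous f)
    (hmid : ∀ x h : E, f (x + h) + f (x - h) ≤ 2 * f x) :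
    ConcaveOn ℝ Set.univ f := by
  refine ⟨convex_univ, fun x _ y _ s t hs ht hst => ?_⟩
  set ψ : ℝ → ℝ := fun r => r * f x + (1 - r) * f y - f (r • x + (1 - r) • y) with hψ
  have hψc : Continuous ψ := by
    apply Continuous.sub (by continuity)
    exact hf.comp (by continuity)
  have hψ0 : ψ 0 = 0 := by simp [hψ]
  have hψ1 : ψ 1 = 0 := by simp [hψ]
  have hψmid : ∀ p q : ℝ, ψ ((p + q) / 2) ≤ (ψ p + ψ q) / 2 := by
    intro p q
    have key := hmid (((p + q) / 2) • x + (1 - (p + q) / 2) • y) (((p - q) / 2) • x - ((p - q) / 2) • y)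
    have e1 : ((p + q) / 2) • x + (1 - (p + q) / 2) • y + (((p - q) / 2) • x - ((p - q) / 2) • y)
        = p • x + (1 - p) • y := by
      module
    have e2 : ((p + q) / 2) • x + (1 - (p + q) / 2) • y - (((p - q) / 2) • x - ((p - q) / 2) • y)
        = q • x + (1 - q) • y := by module
    rw [e1, e2] at key
    simp only [hψ]
    ring_nf
    ring_nf at key
    linarith
  -- show ψ r ≤ 0 for all r in [0,1]
  have main : ∀ r ∈ Icc (0:ℝ) 1, ψ r ≤ 0 := by
    by_contra hcon
    push_neg at hcon
    obtain ⟨r₀, hr₀, hr₀'⟩ := hcon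
    obtain ⟨rm, hrm, hmax⟩ := isCompact_Icc.exists_isMaxOn (Set.nonempty_Icc.2 zero_le_one)
      hψc.continuousOn
    set m := ψ rm with hm
    have hmpos : 0 < m := lt_of_lt_of_le hr₀' (hmax hr₀)
    set S : Set ℝ := {r ∈ Icc (0:ℝ) 1 | ψ r = m} with hS
    have hSne : S.Nonempty := ⟨rm, hrm, rfl⟩
    have hSbdd : BddBelow S := ⟨0, fun r hr => hr.1.1⟩
    have hSclosed : IsClosed S := by
      have : S = Icc (0:ℝ) 1 ∩ ψ ⁻¹' {m} := by ext r; simp [hS, and_comm]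
      rw [this]
      exact isClosed_Icc.inter (isClosed_singleton.preimage hψc)
    set r₁ := sInf S with hr₁
    have hr₁S : r₁ ∈ S := hSclosed.csInf_mem hSne hSbdd
    obtain ⟨⟨hr₁0, hr₁1⟩, hr₁m⟩ := hr₁S
    have hne0 : r₁ ≠ 0 := by intro h; rw [h, hψ0] at hr₁m; linarith
    have hne1 : r₁ ≠ 1 := by intro h; rw [h, hψ1] at hr₁m; linarith
    have h0 : 0 < r₁ := lt_of_le_of_ne hr₁0 (Ne.symm hne0)
    have h1 : r₁ < 1 := lt_of_le_of_ne hr₁1 hne1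
    set d := min r₁ (1 - r₁) with hd
    have hdpos : 0 < d := lt_min h0 (by linarith)
    have hmem1 : r₁ - d ∈ Icc (0:ℝ) 1 := ⟨by have := min_le_left r₁ (1-r₁); linarith, by linarith⟩
    have hmem2 : r₁ + d ∈ Icc (0:ℝ) 1 := ⟨by linarith, by have := min_le_right r₁ (1-r₁); linarith⟩
    have hlt : ψ (r₁ - d) < m := by
      have hle1 : ψ (r₁ - d) ≤ m := hmax hmem1
      rcases lt_or_eq_of_le hle1 with h | h
      · exact h
      · exfalso
        have : r₁ ≤ r₁ - d := csInf_le hSbdd ⟨hmem1, h⟩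
        linarith
    have hle2 : ψ (r₁ + d) ≤ m := hmax hmem2
    have := hψmid (r₁ - d) (r₁ + d)
    have he : (r₁ - d + (r₁ + d)) / 2 = r₁ := by ring
    rw [he, hr₁m] at this
    clear_value d r₁ S m ψ
    linarith
  have h := main s ⟨hs, by linarith⟩
  have hts : t = 1 - s := by linarith
  simp only [hψ] at h
  rw [hts]
  simp only [smul_eq_mul]
  linarith

lemma taylor_bound
    {g : E → ℝ} (hg : ContDiff ℝ 2 g) {M : ℝ}
    (hM : ∀ x, ‖fderiv ℝ (fderiv ℝ g) x‖ ≤ M) :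
    ∀ x h : E, |g (x + h) - g x - fderiv ℝ g x h| ≤ M * ‖h‖ ^ 2 := by
  intro x h
  have hg1 : ContDiff ℝ 1 (fderiv ℝ g) := hg.fderiv_right (by norm_num)
  have hgd : Differentiable ℝ g := hg.differentiable (by norm_num)
  have hlip : ∀ y z : E, ‖fderiv ℝ g y - fderiv ℝ g z‖ ≤ M * ‖y - z‖ := by
    intro y z
    exact (convex_univ).norm_image_sub_le_of_norm_fderiv_le
      (fun w _ => (hg1.differentiable (by norm_num)) w) (fun w _ => hM w) (mem_univ z) (mem_univ y)
  -- function φ y = g y - (fderiv g x) y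
  set L := fderiv ℝ g x with hL
  set φ : E → ℝ := fun y => g y - L y with hφ
  have hφd : ∀ y ∈ segment ℝ x (x + h),
      HasFDerivWithinAt φ (fderiv ℝ g y - L) (segment ℝ x (x + h)) y := by
    intro y _
    exact (((hgd y).hasFDerivAt.sub (L.hasFDerivAt)).hasFDerivWithinAt)
  have hbound : ∀ y ∈ segment ℝ x (x + h), ‖fderiv ℝ g y - L‖ ≤ M * ‖h‖ := by
    intro y hy
    obtain ⟨s, t, hs, ht, hst, rfl⟩ := hy
    have : s • x + t • (x + h) - x = t • h := by
      have : s = 1 - t := by linarith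
      rw [this]; module
    calc ‖fderiv ℝ g (s • x + t • (x + h)) - L‖ ≤ M * ‖s • x + t • (x + h) - x‖ := hlip _ _
      _ = M * (t * ‖h‖) := by rw [this, norm_smul, Real.norm_eq_abs, abs_of_nonneg ht]
      _ ≤ M * ‖h‖ := by
          have hM0 : 0 ≤ M := le_trans (norm_nonneg (fderiv ℝ (fderiv ℝ g) x)) (hM x)
          have ht1 : t ≤ 1 := by linarith
          nlinarith [mul_nonneg (mul_nonneg hM0 (norm_nonneg h)) (sub_nonneg.2 ht1)]
  have key := (convex_segment x (x + h)).norm_image_sub_le_of_norm_hasFDerivWithin_le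
    hφd hbound (left_mem_segment ℝ x (x + h)) (right_mem_segment ℝ x (x + h))
  have e : φ (x + h) - φ x = g (x + h) - g x - L h := by
    simp only [hφ]
    have : L (x + h) = L x + L h := by rw [map_add]
    rw [this]; ring
  rw [Real.norm_eq_abs, e] at key
  calc |g (x + h) - g x - L h| ≤ M * ‖h‖ * ‖x + h - x‖ := key
    _ = M * ‖h‖ ^ 2 := by rw [add_sub_cancel_left]; ring

lemma grad_bound
    {g : E → ℝ} (hg0 : ∀ x, 0 ≤ g x) {M : ℝ} (hMpos : 0 < M)
    (hT : ∀ x h : E, |g (x + h) - g x - fderiv ℝ g x h| ≤ M * ‖h‖ ^ 2) :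
    ∀ x h : E, |fderiv ℝ g x h| ≤ 2 * Real.sqrt (M * g x) * ‖h‖ := by
  intro x h
  rcases eq_or_ne h 0 with rfl | hne
  · simp
  have hnorm : 0 < ‖h‖ := norm_pos_iff.2 hne
  have quad : ∀ t : ℝ, 0 ≤ (M * ‖h‖ ^ 2) * (t * t) + (fderiv ℝ g x h) * t + g x := by
    intro t
    have h1 := hT x (t • h)
    have h2 : fderiv ℝ g x (t • h) = t * fderiv ℝ g x h := by
      rw [map_smul]; rfl
    have h3 : ‖t • h‖ ^ 2 = t ^ 2 * ‖h‖ ^ 2 := by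
      rw [norm_smul, Real.norm_eq_abs, mul_pow, sq_abs]
    rw [h2, h3] at h1
    have h4 : g (x + t • h) - g x - t * fderiv ℝ g x h ≤ M * (t ^ 2 * ‖h‖ ^ 2) := le_of_abs_le h1
    have h5 : 0 ≤ g (x + t • h) := hg0 _
    have h6 : t ^ 2 = t * t := sq t
    nlinarith
  have hdisc := discrim_le_zero quad
  rw [discrim] at hdisc
  have hb2 : (fderiv ℝ g x h) ^ 2 ≤ 4 * (M * g x) * ‖h‖ ^ 2 := by nlinarith
  have hsq : (2 * Real.sqrt (M * g x) * ‖h‖) ^ 2 = 4 * (M * g x) * ‖h‖ ^ 2 := by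
    have : Real.sqrt (M * g x) ^ 2 = M * g x := Real.sq_sqrt (mul_nonneg hMpos.le (hg0 x))
    nlinarith
  calc |fderiv ℝ g x h| = Real.sqrt ((fderiv ℝ g x h) ^ 2) := (Real.sqrt_sq_eq_abs _).symm
    _ ≤ Real.sqrt ((2 * Real.sqrt (M * g x) * ‖h‖) ^ 2) := Real.sqrt_le_sqrt (by rw [hsq]; exact hb2)
    _ = 2 * Real.sqrt (M * g x) * ‖h‖ := Real.sqrt_sq (by positivity)

end Aux

theorem product_semiconcave (n : ℕ)
    (u : EuclideanSpace ℝ (Fin n) → ℝ)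
    (hu_bdd : ∃ C : ℝ, ∀ x ∈ Metric.ball (0 : EuclideanSpace ℝ (Fin n)) 1, |u x| ≤ C)
    (a : ℝ) (ha : 0 < a)
    (hu_sc : ConcaveOn ℝ (Metric.ball (0 : EuclideanSpace ℝ (Fin n)) 1)
      (fun x => u x - ‖x‖ ^ 2 / a))
    (g : EuclideanSpace ℝ (Fin n) → ℝ)
    (hg_smooth : ContDiff ℝ 2 g)
    (hg_nonneg : ∀ x, 0 ≤ g x)
    (hg_supp : tsupport g ⊆ Metric.ball (0 : EuclideanSpace ℝ (Fin n)) 1)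
    (hg_cpt : HasCompactSupport g) :
    ∃ C : ℝ, 0 < C ∧ ConcaveOn ℝ Set.univ
      (fun x : EuclideanSpace ℝ (Fin n) =>
        (Metric.ball (0 : EuclideanSpace ℝ (Fin n)) 1).indicator
          (fun y => g y * u y) x - C * ‖x‖ ^ 2) := by
  classical
  set B : Set (EuclideanSpace ℝ (Fin n)) := Metric.ball 0 1 with hBdef
  obtain ⟨Cu, hCu⟩ := hu_bdd
  have h0B : (0 : EuclideanSpace ℝ (Fin n)) ∈ B := by simp [hBdef]
  have hCu0 : 0 ≤ Cu := le_trans (abs_nonneg _) (hCu 0 h0B)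
  set w : EuclideanSpace ℝ (Fin n) → ℝ := fun x => u x - ‖x‖ ^ 2 / a with hwdef
  set Cw : ℝ := Cu + 1 / a with hCwdef
  have hCw0 : 0 < Cw := by positivity
  have hwB : ∀ x ∈ B, |w x| ≤ Cw := by
    intro x hx
    have hx1 : ‖x‖ < 1 := mem_ball_zero_iff.mp hx
    have hx2 : ‖x‖ ^ 2 ≤ 1 := by nlinarith [norm_nonneg x]
    have h3 : |‖x‖ ^ 2 / a| ≤ 1 / a := by
      rw [abs_of_nonneg (by positivity)]
      gcongr
    calc |w x| ≤ |u x| + |‖x‖ ^ 2 / a| := abs_sub _ _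
      _ ≤ Cu + 1 / a := add_le_add (hCu x hx) h3
  -- radius of support
  set K : Set (EuclideanSpace ℝ (Fin n)) := tsupport g with hKdef
  obtain ⟨ρ, hρ0, hρ1, hKρ⟩ :
      ∃ ρ : ℝ, 0 ≤ ρ ∧ ρ < 1 ∧ K ⊆ closedBall 0 ρ := by
    rcases K.eq_empty_or_nonempty with hKe | hKne
    · exact ⟨1/2, by norm_num, by norm_num, by simp [hKe]⟩
    · obtain ⟨x₀, hx₀K, hmax⟩ := hg_cpt.exists_isMaxOn hKne continuous_norm.continuousOn
      refine ⟨‖x₀‖, norm_nonneg _, mem_ball_zero_iff.mp (hg_supp hx₀K), fun y hy => ?_⟩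
      rw [mem_closedBall_zero_iff]
      exact hmax hy
  set r : ℝ := (1 - ρ) / 4 with hrdef
  have hrpos : 0 < r := by rw [hrdef]; linarith
  set R : ℝ := (1 + ρ) / 2 with hRdef
  have hR1 : R < 1 := by rw [hRdef]; linarith
  set ε₁ : ℝ := (1 - R) / 2 with hε₁def
  have hε₁pos : 0 < ε₁ := by rw [hε₁def]; linarith
  have hRball : closedBall (0 : EuclideanSpace ℝ (Fin n)) R ⊆ ball 0 (1 - ε₁) := by
    apply closedBall_subset_ball; rw [hε₁def]; linarith
  have hballB : ball (0 : EuclideanSpace ℝ (Fin n)) (1 - ε₁) ⊆ B := by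
    rw [hBdef]; apply ball_subset_ball; linarith
  -- Lipschitz bound for w
  have hwc : ConcaveOn ℝ (ball (0 : EuclideanSpace ℝ (Fin n)) 1) w := hu_sc
  have hlip : LipschitzOnWith (2 * Cw / ε₁).toNNReal w
      (ball (0 : EuclideanSpace ℝ (Fin n)) (1 - ε₁)) := by
    have := hwc.lipschitzOnWith_of_abs_le hε₁pos hwB
    exact this
  set Lc : ℝ := 2 * Cw / ε₁ with hLcdef
  have hLc0 : 0 ≤ Lc := div_nonneg (by linarith) hε₁pos.le
  have hLccoe : ((Lc).toNNReal : ℝ) = Lc := Real.coe_toNNReal _ hLc0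
  -- bounds on g and its derivatives
  obtain ⟨M₀, hM₀⟩ := hg_cpt.exists_bound_of_continuous hg_smooth.continuous
  have hM₀' : ∀ x, g x ≤ M₀ := by
    intro x
    have := hM₀ x
    rw [Real.norm_eq_abs, abs_of_nonneg (hg_nonneg x)] at this
    exact this
  have hM₀0 : 0 ≤ M₀ := le_trans (hg_nonneg 0) (hM₀' 0)
  have hg2cont : Continuous (fderiv ℝ (fderiv ℝ g)) := by
    have h1 : ContDiff ℝ 1 (fderiv ℝ g) := hg_smooth.fderiv_right (by norm_num)
    have h2 : ContDiff ℝ 0 (fderiv ℝ (fderiv ℝ g)) := h1.fderiv_right (by norm_num)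
    exact h2.continuous
  have hbhg_cpt := @HasCompactSupport.exists_bound_of_continuous (EuclideanSpace ℝ (Fin n)) (EuclideanSpace ℝ (Fin n) →L[ℝ] EuclideanSpace ℝ (Fin n) →L[ℝ] ℝ) _ _ _
    ((hg_cpt.fderiv ℝ).fderiv ℝ)
  obtain ⟨M₂', hM₂'⟩ := hbhg_cpt hg2cont
  set M₂ : ℝ := |M₂'| + 1 with hM₂def
  have hM₂pos : 0 < M₂ := by positivity
  have hM₂bd : ∀ x, ‖fderiv ℝ (fderiv ℝ g) x‖ ≤ M₂ := fun x =>
    (hM₂' x).trans (by rw [hM₂def]; exact (le_abs_self _).trans (by linarith))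
  have hTg := taylor_bound hg_smooth hM₂bd
  have hGr := grad_bound hg_nonneg hM₂pos hTg
  -- the smooth auxiliary function G = g * ‖·‖²/a
  set G : EuclideanSpace ℝ (Fin n) → ℝ := fun x => g x * (‖x‖ ^ 2 / a) with hGdef
  have hGsmooth : ContDiff ℝ 2 G := by
    apply hg_smooth.mul
    exact (contDiff_norm_sq ℝ (n := 2)).div_const a
  have hGcpt : HasCompactSupport G := hg_cpt.mul_right
  have hG2cont : Continuous (fderiv ℝ (fderiv ℝ G)) := by
    have h1 : ContDiff ℝ 1 (fderiv ℝ G) := hGsmooth.fderiv_right (by norm_num)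
    exact (h1.fderiv_right (by norm_num) : ContDiff ℝ 0 _).continuous
  have hbhGcpt := @HasCompactSupport.exists_bound_of_continuous (EuclideanSpace ℝ (Fin n)) (EuclideanSpace ℝ (Fin n) →L[ℝ] EuclideanSpace ℝ (Fin n) →L[ℝ] ℝ) _ _ _
    ((hGcpt.fderiv ℝ).fderiv ℝ)
  obtain ⟨MG', hMG'⟩ := hbhGcpt hG2cont
  set MG : ℝ := |MG'| + 1 with hMGdef
  have hMGpos : 0 < MG := by positivity
  have hMGbd : ∀ x, ‖fderiv ℝ (fderiv ℝ G) x‖ ≤ MG := fun x =>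
    (hMG' x).trans (by rw [hMGdef]; exact (le_abs_self _).trans (by linarith))
  have hTG := taylor_bound hGsmooth hMGbd
  -- the function f
  set f : EuclideanSpace ℝ (Fin n) → ℝ := fun x => B.indicator (fun y => g y * u y) x
    with hfdef
  have hfK : ∀ z, z ∉ K → f z = 0 := by
    intro z hz
    have hgz : g z = 0 := image_eq_zero_of_notMem_tsupport hz
    by_cases hzB : z ∈ B
    · simp [hfdef, indicator_of_mem hzB, hgz]
    · simp [hfdef, indicator_of_notMem hzB]
  have hfB : ∀ z, z ∈ B → f z = g z * u z := by
    intro z hz; simp [hfdef, indicator_of_mem hz]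
  have hfbd : ∀ z, |f z| ≤ M₀ * Cu := by
    intro z
    by_cases hz : z ∈ B
    · rw [hfB z hz, abs_mul, abs_of_nonneg (hg_nonneg z)]
      exact mul_le_mul (hM₀' z) (hCu z hz) (abs_nonneg _) hM₀0
    · rw [hfdef]; simp [indicator_of_notMem hz]; positivity
  -- continuity of f
  have hwcont : ContinuousOn w (ball (0 : EuclideanSpace ℝ (Fin n)) (1 - ε₁)) :=
    hlip.continuousOn
  have hfc : Continuous f := by
    rw [continuous_iff_continuousAt]
    intro x
    by_cases hxK : x ∈ K
    · -- x ∈ K ⊆ closedBall ρ ⊆ ball (1-ε₁) ⊆ B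
      have hx1 : x ∈ ball (0 : EuclideanSpace ℝ (Fin n)) (1 - ε₁) := by
        have := hKρ hxK
        rw [mem_closedBall_zero_iff] at this
        rw [mem_ball_zero_iff]
        have : ρ < 1 - ε₁ := by rw [hε₁def, hRdef]; linarith
        linarith [mem_closedBall_zero_iff.mp (hKρ hxK)]
      have hxB : x ∈ B := hballB hx1
      have hwx : ContinuousAt w x := hwcont.continuousAt (isOpen_ball.mem_nhds hx1)
      have hux : ContinuousAt u x := by
        have : ContinuousAt (fun y => w y + ‖y‖ ^ 2 / a) x :=
          hwx.add (((continuous_norm.pow 2).div_const a).continuousAt)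
        have he : (fun y : EuclideanSpace ℝ (Fin n) => w y + ‖y‖ ^ 2 / a) = u := by
          funext y; simp [hwdef]
        rw [← he]; exact this
      have hgu : ContinuousAt (fun y => g y * u y) x := hg_smooth.continuous.continuousAt.mul hux
      apply hgu.congr
      filter_upwards [isOpen_ball.mem_nhds (hBdef ▸ hxB)] with y hy
      exact (hfB y hy).symm
    · -- f = 0 near x
      have : ContinuousAt (fun _ : EuclideanSpace ℝ (Fin n) => (0:ℝ)) x := continuousAt_const
      apply this.congr
      have hKc : IsOpen Kᶜ := (isClosed_tsupport g).isOpen_compl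
      filter_upwards [hKc.mem_nhds hxK] with y hy
      exact (hfK y hy).symm
  -- the master constant
  clear_value B w Cw K r R ε₁ Lc M₂ G MG f
  have hA0 : 0 ≤ 4 * (M₀ * Cu) / r ^ 2 :=
    div_nonneg (mul_nonneg (by norm_num) (mul_nonneg hM₀0 hCu0)) (sq_nonneg r)
  obtain ⟨C₀, hC₀def⟩ : ∃ c : ℝ, c = max (4 * (M₀ * Cu) / r ^ 2)
      (4 * Real.sqrt (M₂ * M₀) * Lc + 2 * M₂ * Cw + 2 * MG) := ⟨_, rfl⟩
  have hC₀0 : 0 ≤ C₀ := hC₀def ▸ le_trans hA0 (le_max_left _ _)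
  -- the key midpoint estimate
  have key : ∀ x h : EuclideanSpace ℝ (Fin n),
      f (x + h) + f (x - h) - 2 * f x ≤ C₀ * ‖h‖ ^ 2 := by
    intro x h
    by_cases hhr : ‖h‖ < r
    · by_cases hK3 : x ∈ K ∨ x + h ∈ K ∨ x - h ∈ K
      · -- all three points are well inside the ball
        have hnx : ‖x‖ ≤ R ∧ ‖x + h‖ ≤ R ∧ ‖x - h‖ ≤ R := by
          have n1 : ‖x + h‖ ≤ ‖x‖ + ‖h‖ := norm_add_le _ _
          have n2 : ‖x - h‖ ≤ ‖x‖ + ‖h‖ := norm_sub_le _ _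
          have n3 : ‖x‖ ≤ ‖x + h‖ + ‖h‖ := by
            calc ‖x‖ = ‖x + h - h‖ := by rw [add_sub_cancel_right]
              _ ≤ ‖x + h‖ + ‖h‖ := norm_sub_le _ _
          have n4 : ‖x‖ ≤ ‖x - h‖ + ‖h‖ := by
            calc ‖x‖ = ‖x - h + h‖ := by rw [sub_add_cancel]
              _ ≤ ‖x - h‖ + ‖h‖ := norm_add_le _ _
          have hRr : R = ρ + 2 * r := by rw [hRdef, hrdef]; ring
          rcases hK3 with hk | hk | hk <;>
            have hρb := mem_closedBall_zero_iff.mp (hKρ hk) <;>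
            refine ⟨by linarith, by linarith, by linarith⟩
        obtain ⟨nx, np, nq⟩ := hnx
        have hxB : x ∈ ball (0 : EuclideanSpace ℝ (Fin n)) (1 - ε₁) :=
          hRball (mem_closedBall_zero_iff.mpr nx)
        have hpB : x + h ∈ ball (0 : EuclideanSpace ℝ (Fin n)) (1 - ε₁) :=
          hRball (mem_closedBall_zero_iff.mpr np)
        have hqB : x - h ∈ ball (0 : EuclideanSpace ℝ (Fin n)) (1 - ε₁) :=
          hRball (mem_closedBall_zero_iff.mpr nq)
        have hxB' : x ∈ B := hballB hxB
        have hpB' : x + h ∈ B := hballB hpB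
        have hqB' : x - h ∈ B := hballB hqB
        -- decompositions
        have hfx : f x = g x * w x + G x := by
          rw [hfB x hxB']; simp only [hwdef, hGdef]; ring
        have hfp : f (x + h) = g (x + h) * w (x + h) + G (x + h) := by
          rw [hfB _ hpB']; simp only [hwdef, hGdef]; ring
        have hfq : f (x - h) = g (x - h) * w (x - h) + G (x - h) := by
          rw [hfB _ hqB']; simp only [hwdef, hGdef]; ring
        -- G part
        have hG1 := hTG x h
        have hG2 := hTG x (-h)
        rw [← sub_eq_add_neg, map_neg, norm_neg, sub_neg_eq_add] at hG2
        have hGpart : G (x + h) + G (x - h) - 2 * G x ≤ 2 * MG * ‖h‖ ^ 2 := by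
          have a1 := (abs_le.mp hG1).2
          have a2 := (abs_le.mp hG2).2
          linarith
        -- concavity part
        have hconc : w (x + h) + w (x - h) - 2 * w x ≤ 0 := by
          have hmidpt : (2⁻¹ : ℝ) • (x + h) + (2⁻¹ : ℝ) • (x - h) = x := by module
          have := hu_sc.2 hpB' hqB' (by norm_num : (0:ℝ) ≤ 2⁻¹)
            (by norm_num : (0:ℝ) ≤ 2⁻¹) (by norm_num)
          rw [hmidpt] at this
          simp only [smul_eq_mul] at this
          linarith
        have term1 : g x * (w (x + h) + w (x - h) - 2 * w x) ≤ 0 :=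
          mul_nonpos_of_nonneg_of_nonpos (hg_nonneg x) hconc
        -- gradient term
        obtain ⟨b, hbdef⟩ : ∃ c : ℝ, c = fderiv ℝ g x h := ⟨_, rfl⟩
        have hb : |b| ≤ 2 * Real.sqrt (M₂ * M₀) * ‖h‖ := by
          rw [hbdef]
          refine (hGr x h).trans ?_
          have hsq : Real.sqrt (M₂ * g x) ≤ Real.sqrt (M₂ * M₀) :=
            Real.sqrt_le_sqrt (mul_le_mul_of_nonneg_left (hM₀' x) hM₂pos.le)
          have : (2:ℝ) * Real.sqrt (M₂ * g x) ≤ 2 * Real.sqrt (M₂ * M₀) := by linarith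
          exact mul_le_mul_of_nonneg_right this (norm_nonneg h)
        have hRp : |g (x + h) - g x - b| ≤ M₂ * ‖h‖ ^ 2 := hbdef ▸ hTg x h
        have hRm : |g (x - h) - g x + b| ≤ M₂ * ‖h‖ ^ 2 := by
          have h2 := hTg x (-h)
          rw [← sub_eq_add_neg, map_neg, norm_neg, sub_neg_eq_add, ← hbdef] at h2
          exact h2
        have hwp : |w (x + h)| ≤ Cw := hwB _ hpB'
        have hwq : |w (x - h)| ≤ Cw := hwB _ hqB'
        have hwpq : |w (x + h) - w (x - h)| ≤ Lc * (2 * ‖h‖) := by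
          have hd := hlip.dist_le_mul _ hpB _ hqB
          rw [Real.dist_eq, dist_eq_norm] at hd
          have he : x + h - (x - h) = (2:ℝ) • h := by module
          rw [he, norm_smul, Real.norm_ofNat] at hd
          calc |w (x + h) - w (x - h)| ≤ ((Lc).toNNReal : ℝ) * (2 * ‖h‖) := hd
            _ = Lc * (2 * ‖h‖) := by rw [hLccoe]
        -- combine the three mixed terms
        have t2 : b * (w (x + h) - w (x - h)) ≤ (4 * Real.sqrt (M₂ * M₀) * Lc) * ‖h‖ ^ 2 := by
          calc b * (w (x + h) - w (x - h)) ≤ |b * (w (x + h) - w (x - h))| := le_abs_self _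
            _ = |b| * |w (x + h) - w (x - h)| := abs_mul _ _
            _ ≤ (2 * Real.sqrt (M₂ * M₀) * ‖h‖) * (Lc * (2 * ‖h‖)) :=
                mul_le_mul hb hwpq (abs_nonneg _)
                  (by positivity)
            _ = (4 * Real.sqrt (M₂ * M₀) * Lc) * ‖h‖ ^ 2 := by ring
        have t3 : (g (x + h) - g x - b) * w (x + h) ≤ M₂ * ‖h‖ ^ 2 * Cw := by
          calc (g (x + h) - g x - b) * w (x + h) ≤ |(g (x + h) - g x - b) * w (x + h)| :=
                le_abs_self _
            _ = |g (x + h) - g x - b| * |w (x + h)| := abs_mul _ _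
            _ ≤ M₂ * ‖h‖ ^ 2 * Cw := mul_le_mul hRp hwp (abs_nonneg _)
                (mul_nonneg hM₂pos.le (sq_nonneg _))
        have t4 : (g (x - h) - g x + b) * w (x - h) ≤ M₂ * ‖h‖ ^ 2 * Cw := by
          calc (g (x - h) - g x + b) * w (x - h) ≤ |(g (x - h) - g x + b) * w (x - h)| :=
                le_abs_self _
            _ = |g (x - h) - g x + b| * |w (x - h)| := abs_mul _ _
            _ ≤ M₂ * ‖h‖ ^ 2 * Cw := mul_le_mul hRm hwq (abs_nonneg _)
                (mul_nonneg hM₂pos.le (sq_nonneg _))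
        have hWid : f (x + h) + f (x - h) - 2 * f x =
            g x * (w (x + h) + w (x - h) - 2 * w x) + b * (w (x + h) - w (x - h))
            + (g (x + h) - g x - b) * w (x + h) + (g (x - h) - g x + b) * w (x - h)
            + (G (x + h) + G (x - h) - 2 * G x) := by
          rw [hfp, hfq, hfx]; ring
        have hsum : f (x + h) + f (x - h) - 2 * f x ≤
            (4 * Real.sqrt (M₂ * M₀) * Lc + 2 * M₂ * Cw + 2 * MG) * ‖h‖ ^ 2 := by
          rw [hWid]; linarith [term1, t2, t3, t4, hGpart]
        refine hsum.trans ?_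
        have hle : (4 * Real.sqrt (M₂ * M₀) * Lc + 2 * M₂ * Cw + 2 * MG) ≤ C₀ := by
          rw [hC₀def]; exact le_max_right _ _
        exact mul_le_mul_of_nonneg_right hle (sq_nonneg _)
      · push_neg at hK3
        obtain ⟨k1, k2, k3⟩ := hK3
        rw [hfK x k1, hfK _ k2, hfK _ k3]
        have : 0 ≤ C₀ * ‖h‖ ^ 2 := mul_nonneg hC₀0 (sq_nonneg _)
        linarith
    · -- large h
      push_neg at hhr
      have h1 := abs_le.mp (hfbd (x + h))
      have h2 := abs_le.mp (hfbd (x - h))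
      have h3 := abs_le.mp (hfbd x)
      have hr2 : r ^ 2 ≤ ‖h‖ ^ 2 := pow_le_pow_left₀ hrpos.le hhr 2
      have e1 : 4 * (M₀ * Cu) / r ^ 2 * r ^ 2 = 4 * (M₀ * Cu) :=
        div_mul_cancel₀ _ (pow_ne_zero 2 hrpos.ne')
      have e2 : 4 * (M₀ * Cu) / r ^ 2 * r ^ 2 ≤ 4 * (M₀ * Cu) / r ^ 2 * ‖h‖ ^ 2 :=
        mul_le_mul_of_nonneg_left hr2 hA0
      have e3 : 4 * (M₀ * Cu) / r ^ 2 * ‖h‖ ^ 2 ≤ C₀ * ‖h‖ ^ 2 :=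
        mul_le_mul_of_nonneg_right (by rw [hC₀def]; exact le_max_left _ _) (sq_nonneg _)
      linarith
  -- conclude
  refine ⟨C₀ + 1, by linarith, ?_⟩
  have hcc : ConcaveOn ℝ Set.univ (fun x => f x - (C₀ + 1) * ‖x‖ ^ 2) := by
    apply midpoint_to_concave
    · exact hfc.sub (continuous_const.mul (continuous_norm.pow 2))
    · intro x h
      try dsimp only
      have par : ‖x + h‖ ^ 2 + ‖x - h‖ ^ 2 = 2 * ‖x‖ ^ 2 + 2 * ‖h‖ ^ 2 := by
        rw [norm_add_sq_real, norm_sub_sq_real]; ring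
      have expand := congrArg (fun t => (C₀ + 1) * t) par
      try simp only [] at expand
      have hk := key x h
      have hnn : 0 ≤ (C₀ + 2) * ‖h‖ ^ 2 := mul_nonneg (by linarith) (sq_nonneg _)
      linarith [hk, expand, hnn]
  rw [hfdef] at hcc
  exact hcc
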